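/- For every integer n ≥ 6 and every pair 1 ≤ i < j ≤ n, the number of elements w of the standard family Fₙ with δ(v_{i,j}, w) = 1 is at most 4, where δ(v,w) := min(d(v,w), n − d(v,w)) and d is the Hamming distance. -/
import Mathlib


/-- Indicator vector of the set of labels {i, i+1, …, j−1}, coordinates labelled 1,…,n. -/
def stdVec (n i j : ℕ) : Fin n → ZMod 2 :=
  fun k => if i ≤ k.val + 1 ∧ k.val + 1 < j then 1 else 0

/-- δ(v,w) = min(d(v,w), n − d(v,w)), where d is the Hamming distance. -/
def hdelta {n : ℕ} (v w : Fin n → ZMod 2) : ℕ :=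
  min (hammingDist v w) (n - hammingDist v w)

/-- The standard family Fₙ: the zero vector together with the vectors v_{i,j}
for 1 ≤ i < j ≤ n. -/
def stdFamily (n : ℕ) : Finset (Fin n → ZMod 2) :=
  insert 0 ((((Finset.Icc 1 n) ×ˢ (Finset.Icc 1 n)).filter fun p => p.1 < p.2).image
    fun p => stdVec n p.1 p.2)

/-- flip of `stdVec n i j` at label `c`. -/
def flipVec (n i j c : ℕ) : Fin n → ZMod 2 :=
  fun k => if k.val + 1 = c then stdVec n i j k + 1 else stdVec n i j k

/-- complement of `stdVec n i j` on labels `1..n-1`. -/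
def cmplVec (n i j : ℕ) : Fin n → ZMod 2 :=
  fun k => if k.val + 1 = n then 0 else stdVec n i j k + 1

lemma zmod2_ne : ∀ x y : ZMod 2, x ≠ y → y = x + 1 := by decide

lemma stdVec_apply (n a b p : ℕ) (h1 : 1 ≤ p) (hpn : p ≤ n) :
    stdVec n a b ⟨p - 1, by omega⟩ = if a ≤ p ∧ p < b then 1 else 0 := by
  simp only [stdVec, Nat.sub_add_cancel h1]

lemma key_lemma (n i j a b c p : ℕ) (hp1 : 1 ≤ p) (hpn : p ≤ n)
    (h : stdVec n a b = flipVec n i j c) :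
    (a ≤ p ∧ p < b) ↔ ((i ≤ p ∧ p < j) ↔ p ≠ c) := by
  have hm := congrFun h ⟨p - 1, by omega⟩
  simp only [stdVec, flipVec, Nat.sub_add_cancel hp1] at hm
  split_ifs at hm <;> first
    | (exact absurd hm (by decide))
    | tauto

lemma key_lemma0 (n i j c p : ℕ) (hp1 : 1 ≤ p) (hpn : p ≤ n)
    (h : (0 : Fin n → ZMod 2) = flipVec n i j c) :
    (i ≤ p ∧ p < j) ↔ p = c := by
  have hm := congrFun h ⟨p - 1, by omega⟩
  simp only [stdVec, flipVec, Nat.sub_add_cancel hp1, Pi.zero_apply] at hm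
  split_ifs at hm <;> first
    | (exact absurd hm (by decide))
    | tauto

lemma keyC (n i j a b p : ℕ) (hp1 : 1 ≤ p) (hpn : p ≤ n)
    (h : stdVec n a b = cmplVec n i j) :
    (a ≤ p ∧ p < b) ↔ (¬(i ≤ p ∧ p < j) ∧ p ≠ n) := by
  have hm := congrFun h ⟨p - 1, by omega⟩
  simp only [stdVec, cmplVec, Nat.sub_add_cancel hp1] at hm
  split_ifs at hm <;> first
    | (exact absurd hm (by decide))
    | tauto

lemma keyC0 (n i j p : ℕ) (hp1 : 1 ≤ p) (hpn : p ≤ n)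
    (h : (0 : Fin n → ZMod 2) = cmplVec n i j) :
    (i ≤ p ∧ p < j) ∨ p = n := by
  have hm := congrFun h ⟨p - 1, by omega⟩
  simp only [stdVec, cmplVec, Nat.sub_add_cancel hp1, Pi.zero_apply] at hm
  split_ifs at hm <;> first
    | (exact absurd hm (by decide))
    | tauto

lemma card4 {α : Type*} [DecidableEq α] (x1 x2 x3 x4 : α) :
    ({x1, x2, x3, x4} : Finset α).card ≤ 4 := by
  have h1 := Finset.card_insert_le x1 ({x2, x3, x4} : Finset α)
  have h2 := Finset.card_insert_le x2 ({x3, x4} : Finset α)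
  have h3 := Finset.card_insert_le x3 ({x4} : Finset α)
  have h4 : ({x4} : Finset α).card = 1 := Finset.card_singleton x4
  omega

theorem stmt_5 (n i j : ℕ) (hn : 6 ≤ n) (hi : 1 ≤ i) (hij : i < j) (hj : j ≤ n) :
    ((stdFamily n).filter fun w => hdelta (stdVec n i j) w = 1).card ≤ 4 := by
  have hsub : ((stdFamily n).filter fun w => hdelta (stdVec n i j) w = 1) ⊆
      {if 2 ≤ i then flipVec n i j (i - 1) else cmplVec n i j,
       flipVec n i j i, flipVec n i j (j - 1),
       if j ≤ n - 1 then flipVec n i j j else cmplVec n i j} := by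
    intro w hw
    rw [Finset.mem_filter] at hw
    obtain ⟨hwF, hwd⟩ := hw
    have hfam : w = 0 ∨ ∃ a b, 1 ≤ a ∧ a < b ∧ b ≤ n ∧ w = stdVec n a b := by
      simp only [stdFamily, Finset.mem_insert, Finset.mem_image, Finset.mem_filter,
        Finset.mem_product, Finset.mem_Icc] at hwF
      rcases hwF with h | ⟨⟨p1, p2⟩, ⟨⟨⟨hp1, hp2⟩, hp3, hp4⟩, hp5⟩, hp6⟩
      · exact Or.inl h
      · exact Or.inr ⟨p1, p2, hp1, hp5, hp4, hp6.symm⟩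
    have hlastv : ∀ a b : ℕ, b ≤ n → stdVec n a b ⟨n - 1, by omega⟩ = 0 := by
      intro a b hb
      rw [stdVec_apply n a b n (by omega) (le_refl n), if_neg (by omega)]
    have hwlast : w ⟨n - 1, by omega⟩ = 0 := by
      rcases hfam with rfl | ⟨a, b, ha, hab, hb, rfl⟩
      · rfl
      · exact hlastv a b hb
    have hdle : hammingDist (stdVec n i j) w ≤ n := by
      simpa using (hammingDist_le_card_fintype (x := stdVec n i j) (y := w))
    have hcase : hammingDist (stdVec n i j) w = 1 ∨ hammingDist (stdVec n i j) w = n - 1 := by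
      unfold hdelta at hwd
      rw [Nat.min_def] at hwd
      split_ifs at hwd <;> omega
    simp only [Finset.mem_insert, Finset.mem_singleton]
    rcases hcase with hd1 | hdn
    · -- distance 1
      rw [show hammingDist (stdVec n i j) w =
        (Finset.univ.filter fun k => stdVec n i j k ≠ w k).card from rfl,
        Finset.card_eq_one] at hd1
      obtain ⟨k0, hk0⟩ := hd1
      have hwflip : w = flipVec n i j (k0.val + 1) := by
        funext m
        by_cases hm : m = k0
        · subst hm
          have hne : stdVec n i j m ≠ w m := by
            have : m ∈ (Finset.univ.filter fun k => stdVec n i j k ≠ w k) := by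
              rw [hk0]; exact Finset.mem_singleton_self m
            exact (Finset.mem_filter.mp this).2
          have := zmod2_ne _ _ hne
          simp only [flipVec, if_pos rfl]
          exact this
        · have heq : stdVec n i j m = w m := by
            by_contra hne
            have : m ∈ (Finset.univ.filter fun k => stdVec n i j k ≠ w k) :=
              Finset.mem_filter.mpr ⟨Finset.mem_univ m, hne⟩
            rw [hk0] at this
            exact hm (Finset.mem_singleton.mp this)
          have hne2 : ¬(m.val + 1 = k0.val + 1) := by
            intro hcontra
            exact hm (Fin.ext (by omega))
          simp only [flipVec, if_neg hne2]
          exact heq.symm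
      have hc1 : 1 ≤ k0.val + 1 := by omega
      have hcn : k0.val + 1 ≤ n := by have := k0.isLt; omega
      rcases hfam with h0 | ⟨a, b, ha, hab, hb, hab2⟩
      · -- w = 0 : then j = i+1 and c = j-1
        have key0 := fun p hp1 hpn => key_lemma0 n i j (k0.val + 1) p hp1 hpn
          (h0 ▸ hwflip)
        have K1 := key0 i hi (by omega)
        have K2 := key0 (j - 1) (by omega) (by omega)
        have hc : k0.val + 1 = j - 1 := by omega
        exact Or.inr (Or.inr (Or.inl (by rw [hwflip, hc])))
      · have hkey := fun p hp1 hpn => key_lemma n i j a b (k0.val + 1) p hp1 hpn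
          (hab2.symm.trans hwflip)
        have K1 := hkey i hi (by omega)
        have K2 := hkey (j - 1) (by omega) (by omega)
        have K3 := hkey (k0.val + 1) hc1 hcn
        have K4 := hkey j (by omega) hj
        have K5 := hkey n (by omega) (le_refl n)
        have K6 : 2 ≤ k0.val + 1 → ((a ≤ k0.val ∧ k0.val < b) ↔
            ((i ≤ k0.val ∧ k0.val < j) ↔ k0.val ≠ k0.val + 1)) := by
          intro h
          have := hkey (k0.val + 1 - 1) (by omega) (by omega)
          simpa using this
        have K7 : k0.val + 1 + 1 ≤ n → ((a ≤ k0.val + 1 + 1 ∧ k0.val + 1 + 1 < b) ↔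
            ((i ≤ k0.val + 1 + 1 ∧ k0.val + 1 + 1 < j) ↔ k0.val + 1 + 1 ≠ k0.val + 1)) :=
          fun h => hkey (k0.val + 1 + 1) (by omega) h
        have K8 : 2 ≤ i → ((a ≤ i - 1 ∧ i - 1 < b) ↔
            ((i ≤ i - 1 ∧ i - 1 < j) ↔ i - 1 ≠ k0.val + 1)) :=
          fun h => hkey (i - 1) (by omega) (by omega)
        have hc : (2 ≤ i ∧ k0.val + 1 = i - 1) ∨ k0.val + 1 = i ∨ k0.val + 1 = j - 1 ∨
            (k0.val + 1 = j ∧ j ≤ n - 1) := by omega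
        rcases hc with ⟨h2i, hc⟩ | hc | hc | ⟨hc, hjn⟩
        · exact Or.inl (by rw [if_pos h2i, hwflip, hc])
        · exact Or.inr (Or.inl (by rw [hwflip, hc]))
        · exact Or.inr (Or.inr (Or.inl (by rw [hwflip, hc])))
        · exact Or.inr (Or.inr (Or.inr (by rw [if_pos hjn, hwflip, hc])))
    · -- distance n - 1
      have hcard : (Finset.univ.filter fun k => stdVec n i j k ≠ w k).card = n - 1 := hdn
      have hD : (Finset.univ.filter fun k => stdVec n i j k ≠ w k) =
          Finset.univ.erase ⟨n - 1, by omega⟩ := by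
        apply Finset.eq_of_subset_of_card_le
        · intro k hk
          rw [Finset.mem_filter] at hk
          refine Finset.mem_erase.mpr ⟨?_, Finset.mem_univ k⟩
          rintro rfl
          exact hk.2 ((hlastv i j hj).trans hwlast.symm)
        · rw [Finset.card_erase_of_mem (Finset.mem_univ _), Finset.card_univ,
            Fintype.card_fin, hcard]
      have hwC : w = cmplVec n i j := by
        funext k
        by_cases hk : k.val + 1 = n
        · have hkl : k = (⟨n - 1, by omega⟩ : Fin n) := Fin.ext (show k.val = n - 1 by omega)
          have h2 : cmplVec n i j k = 0 := by simp only [cmplVec, if_pos hk]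
          rw [h2, hkl]
          exact hwlast
        · have hkm : k ∈ Finset.univ.erase (⟨n - 1, by omega⟩ : Fin n) :=
            Finset.mem_erase.mpr ⟨fun hcontra => hk (by rw [hcontra]; exact (show n - 1 + 1 = n by omega)), Finset.mem_univ k⟩
          rw [← hD, Finset.mem_filter] at hkm
          have := zmod2_ne _ _ hkm.2
          simp only [cmplVec, if_neg hk]
          exact this
      by_cases hi2 : 2 ≤ i
      · by_cases hj2 : j ≤ n - 1
        · exfalso
          rcases hfam with h0 | ⟨a, b, ha, hab, hb, hab2⟩
          · have := keyC0 n i j 1 (by omega) (by omega) (h0 ▸ hwC)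
            omega
          · have hkeyC := fun p hp1 hpn => keyC n i j a b p hp1 hpn (hab2.symm.trans hwC)
            have K1 := hkeyC 1 (by omega) (by omega)
            have K2 := hkeyC (n - 1) (by omega) (by omega)
            have K3 := hkeyC i hi (by omega)
            omega
        · exact Or.inr (Or.inr (Or.inr (by rw [if_neg hj2]; exact hwC)))
      · exact Or.inl (by rw [if_neg hi2]; exact hwC)
  exact le_trans (Finset.card_le_card hsub) (card4 _ _ _ _)
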